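/- If G is a graph of order n ≥ 2 in which every two nonadjacent vertices have at most l common neighbors and no two adjacent vertices have a common neighbor (triangle-free), then μ(G) ≤ (1 - l + sqrt((1-l)² + 4l(n-1)))/2. -/
import Mathlib


/-- The spectral radius (largest adjacency eigenvalue) of a graph. -/
noncomputable def graphMu {n : ℕ} (G : SimpleGraph (Fin n)) [DecidableRel G.Adj] : ℝ :=
  sSup {x : ℝ | Module.End.HasEigenvalue (Matrix.toLin' (G.adjMatrix ℝ)) x}

theorem triangle_free_K2l_bound {n l : ℕ} (hn : 2 ≤ n) (G : SimpleGraph (Fin n))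
    [DecidableRel G.Adj] (htf : G.CliqueFree 3)
    (hK2l : ∀ u v : Fin n, u ≠ v → ¬ G.Adj u v →
      (G.neighborFinset u ∩ G.neighborFinset v).card ≤ l) :
    graphMu G ≤
      (1 - (l : ℝ) +
        Real.sqrt ((1 - (l : ℝ)) ^ 2 + 4 * l * ((n : ℝ) - 1))) / 2 := by
  classical
  have hn1 : (1:ℝ) ≤ (n:ℝ) := by
    have : (2:ℝ) ≤ (n:ℝ) := by exact_mod_cast hn
    linarith
  set L : ℝ := (l : ℝ) with hL
  have hL0 : 0 ≤ L := Nat.cast_nonneg l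
  have harg : (0:ℝ) ≤ (1 - L) ^ 2 + 4 * L * ((n:ℝ) - 1) := by nlinarith [sq_nonneg (1 - L)]
  set s : ℝ := Real.sqrt ((1 - L) ^ 2 + 4 * L * ((n:ℝ) - 1)) with hsdef
  have hs0 : 0 ≤ s := Real.sqrt_nonneg _
  have hs2 : s ^ 2 = (1 - L) ^ 2 + 4 * L * ((n:ℝ) - 1) := Real.sq_sqrt harg
  have habs : |1 - L| ≤ s := by
    rw [hsdef, ← Real.sqrt_sq_eq_abs]
    exact Real.sqrt_le_sqrt (by nlinarith)
  have hB0 : 0 ≤ (1 - L + s) / 2 := by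
    have := neg_abs_le (1 - L)
    linarith
  apply Real.sSup_le _ hB0
  rintro lam hlam
  obtain ⟨x, hx⟩ := hlam.exists_hasEigenvector
  have hAx : Matrix.toLin' (G.adjMatrix ℝ) x = lam • x := hx.apply_eq_smul
  rw [Matrix.toLin'_apply] at hAx
  have hmul : ∀ w : Fin n, ∑ v ∈ G.neighborFinset w, x v = lam * x w := by
    intro w
    have := congrFun hAx w
    simpa using this
  -- choose u maximizing |x u|
  obtain ⟨u, -, hu⟩ := Finset.exists_max_image Finset.univ (fun v => |x v|)
    ⟨⟨0, by omega⟩, Finset.mem_univ _⟩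
  have hu' : ∀ v : Fin n, |x v| ≤ |x u| := fun v => hu v (Finset.mem_univ v)
  have hxu : 0 < |x u| := by
    obtain ⟨i, hi⟩ := Function.ne_iff.mp hx.right
    exact lt_of_lt_of_le (abs_pos.mpr hi) (hu' i)
  set d : ℕ := (G.neighborFinset u).card with hd
  have hdn : d < n := by
    have h := G.degree_lt_card_verts u
    have he : G.degree u = d := rfl
    rw [he] at h
    simpa using h
  -- lam ≤ d
  have hlamd : lam ≤ (d : ℝ) := by
    have h1 : lam * |x u| ≤ (d : ℝ) * |x u| := by
      calc lam * |x u| ≤ |lam| * |x u| :=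
            mul_le_mul_of_nonneg_right (le_abs_self lam) (abs_nonneg _)
        _ = |lam * x u| := (abs_mul lam (x u)).symm
        _ = |∑ v ∈ G.neighborFinset u, x v| := by rw [hmul u]
        _ ≤ ∑ v ∈ G.neighborFinset u, |x v| := Finset.abs_sum_le_sum_abs _ _
        _ ≤ ∑ _v ∈ G.neighborFinset u, |x u| :=
            Finset.sum_le_sum fun v _ => hu' v
        _ = (d : ℝ) * |x u| := by rw [Finset.sum_const, nsmul_eq_mul]
    exact le_of_mul_le_mul_right h1 hxu
  -- lam^2 ≤ d + L * (n - 1 - d)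
  have hkey : lam ^ 2 * x u = ∑ v ∈ G.neighborFinset u, ∑ w ∈ G.neighborFinset v, x w := by
    calc lam ^ 2 * x u = lam * (lam * x u) := by ring
      _ = lam * ∑ v ∈ G.neighborFinset u, x v := by rw [hmul u]
      _ = ∑ v ∈ G.neighborFinset u, lam * x v := Finset.mul_sum _ _ _
      _ = ∑ v ∈ G.neighborFinset u, ∑ w ∈ G.neighborFinset v, x w :=
          Finset.sum_congr rfl fun v _ => (hmul v).symm
  have hswap : ∑ v ∈ G.neighborFinset u, ∑ w ∈ G.neighborFinset v, |x w|
      = ∑ w : Fin n, ((G.neighborFinset u ∩ G.neighborFinset w).card : ℝ) * |x w| := by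
    have h1 : ∀ v : Fin n, ∑ w ∈ G.neighborFinset v, |x w|
        = ∑ w : Fin n, if G.Adj v w then |x w| else 0 := by
      intro v
      rw [SimpleGraph.neighborFinset_eq_filter, Finset.sum_filter]
    rw [Finset.sum_congr rfl fun v _ => h1 v, Finset.sum_comm]
    refine Finset.sum_congr rfl fun w _ => ?_
    have h2 : ∀ v : Fin n, (if G.Adj v w then |x w| else 0)
        = if v ∈ G.neighborFinset w then |x w| else 0 := by
      intro v
      simp [SimpleGraph.mem_neighborFinset, G.adj_comm]
    rw [Finset.sum_congr rfl fun v _ => h2 v, Finset.sum_ite_mem,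
      Finset.sum_const, nsmul_eq_mul]
  -- triangle-free: adjacent vertices have no common neighbors
  have htri : ∀ a b c : Fin n, G.Adj a b → G.Adj a c → G.Adj b c → False := by
    intro a b c hab hac hbc
    exact htf {a, b, c} (SimpleGraph.is3Clique_triple_iff.mpr ⟨hab, hac, hbc⟩)
  set g : Fin n → ℝ := fun w => if w = u then (d : ℝ) else if G.Adj u w then 0 else L with hg
  have hterm : ∀ w : Fin n,
      ((G.neighborFinset u ∩ G.neighborFinset w).card : ℝ) * |x w| ≤ g w * |x u| := by
    intro w
    by_cases hwu : w = u
    · subst hwu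
      simp only [hg, if_pos rfl, Finset.inter_self]
      exact mul_le_mul_of_nonneg_left (hu' w) (Nat.cast_nonneg _)
    · by_cases hadj : G.Adj u w
      · have hempty : G.neighborFinset u ∩ G.neighborFinset w = ∅ := by
          rw [Finset.eq_empty_iff_forall_notMem]
          intro v hv
          rw [Finset.mem_inter, SimpleGraph.mem_neighborFinset,
            SimpleGraph.mem_neighborFinset] at hv
          exact htri u w v hadj hv.1 hv.2
        simp [hg, hwu, hadj, hempty]
      · have hcard : ((G.neighborFinset u ∩ G.neighborFinset w).card : ℝ) ≤ L := by
          rw [hL]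
          exact_mod_cast hK2l u w (Ne.symm hwu) hadj
        simp only [hg, if_neg hwu, if_neg hadj]
        exact mul_le_mul hcard (hu' w) (abs_nonneg _) hL0
  -- sum of g
  have hsub : insert u (G.neighborFinset u) ⊆ Finset.univ := Finset.subset_univ _
  have hnotmem : u ∉ G.neighborFinset u := by simp
  have hcardA : (insert u (G.neighborFinset u)).card = d + 1 := by
    rw [Finset.card_insert_of_notMem hnotmem]
  have hsumg : ∑ w : Fin n, g w = (d : ℝ) + L * ((n : ℝ) - 1 - d) := by
    rw [← Finset.sum_sdiff hsub]
    have hA : ∑ w ∈ insert u (G.neighborFinset u), g w = (d : ℝ) := by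
      rw [Finset.sum_insert hnotmem]
      have : ∑ w ∈ G.neighborFinset u, g w = 0 := by
        apply Finset.sum_eq_zero
        intro w hw
        rw [SimpleGraph.mem_neighborFinset] at hw
        have hwu : w ≠ u := fun h => G.irrefl (h ▸ hw)
        simp [hg, hwu, hw]
      rw [this, hg]
      simp
    have hB : ∑ w ∈ Finset.univ \ insert u (G.neighborFinset u), g w
        = L * ((n : ℝ) - 1 - d) := by
      have hval : ∀ w ∈ Finset.univ \ insert u (G.neighborFinset u), g w = L := by
        intro w hw
        rw [Finset.mem_sdiff, Finset.mem_insert] at hw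
        push_neg at hw
        have hwu : w ≠ u := hw.2.1
        have hadj : ¬ G.Adj u w := fun h => hw.2.2 (by simpa using h)
        simp [hg, hwu, hadj]
      rw [Finset.sum_congr rfl hval, Finset.sum_const, nsmul_eq_mul,
        Finset.card_sdiff_of_subset hsub, hcardA]
      have hcu : (Finset.univ : Finset (Fin n)).card = n := by simp
      rw [hcu]
      have : ((n - (d + 1) : ℕ) : ℝ) = (n : ℝ) - 1 - d := by
        have : d + 1 ≤ n := hdn
        push_cast [Nat.cast_sub this]
        ring
      rw [this]
      ring
    rw [hA, hB]
    ring
  have hlam2 : lam ^ 2 ≤ (d : ℝ) + L * ((n : ℝ) - 1 - d) := by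
    have h1 : lam ^ 2 * |x u| ≤ ((d : ℝ) + L * ((n : ℝ) - 1 - d)) * |x u| := by
      calc lam ^ 2 * |x u| = |lam ^ 2 * x u| := by
            rw [abs_mul, abs_of_nonneg (sq_nonneg lam)]
        _ = |∑ v ∈ G.neighborFinset u, ∑ w ∈ G.neighborFinset v, x w| := by rw [hkey]
        _ ≤ ∑ v ∈ G.neighborFinset u, |∑ w ∈ G.neighborFinset v, x w| :=
            Finset.abs_sum_le_sum_abs _ _
        _ ≤ ∑ v ∈ G.neighborFinset u, ∑ w ∈ G.neighborFinset v, |x w| :=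
            Finset.sum_le_sum fun v _ => Finset.abs_sum_le_sum_abs _ _
        _ = ∑ w : Fin n, ((G.neighborFinset u ∩ G.neighborFinset w).card : ℝ) * |x w| :=
            hswap
        _ ≤ ∑ w : Fin n, g w * |x u| := Finset.sum_le_sum fun w _ => hterm w
        _ = (∑ w : Fin n, g w) * |x u| := (Finset.sum_mul _ _ _).symm
        _ = ((d : ℝ) + L * ((n : ℝ) - 1 - d)) * |x u| := by rw [hsumg]
    exact le_of_mul_le_mul_right h1 hxu
  -- conclude
  rcases Nat.eq_zero_or_pos l with hl0 | hl1
  · -- l = 0 : every degree is at most 1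
    subst hl0
    have hd1 : (d : ℝ) ≤ 1 := by
      by_contra hc
      push_neg at hc
      have h2d : 1 < d := by exact_mod_cast hc
      obtain ⟨a, ha, b, hb, hab⟩ := Finset.one_lt_card.mp h2d
      rw [SimpleGraph.mem_neighborFinset] at ha hb
      have hnadj : ¬ G.Adj a b := fun h => htri u a b ha hb h
      have := hK2l a b hab hnadj
      have humem : u ∈ G.neighborFinset a ∩ G.neighborFinset b := by
        rw [Finset.mem_inter, SimpleGraph.mem_neighborFinset, SimpleGraph.mem_neighborFinset]
        exact ⟨ha.symm, hb.symm⟩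
      have : 0 < (G.neighborFinset a ∩ G.neighborFinset b).card :=
        Finset.card_pos.mpr ⟨u, humem⟩
      omega
    have hs1 : s = 1 := by
      have : (1 - L) ^ 2 + 4 * L * ((n:ℝ) - 1) = 1 := by
        simp [hL]
      rw [hsdef, this, Real.sqrt_one]
    rw [hs1]
    have hLz : L = 0 := by simp [hL]
    rw [hLz] at hlam2 ⊢
    nlinarith [sq_nonneg (lam - 1)]
  · have hL1 : (1 : ℝ) ≤ L := by rw [hL]; exact_mod_cast hl1
    have hq : lam ^ 2 ≤ lam * (1 - L) + L * ((n : ℝ) - 1) := by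
      have hd1L : (d : ℝ) * (1 - L) ≤ lam * (1 - L) :=
        mul_le_mul_of_nonpos_right hlamd (by linarith)
      have hexp : (d:ℝ) + L * ((n:ℝ) - 1 - d) = (d:ℝ) * (1 - L) + L * ((n:ℝ) - 1) := by ring
      rw [hexp] at hlam2
      linarith
    have h4 : (2 * lam - (1 - L)) ^ 2 ≤ s ^ 2 := by nlinarith [hq, hs2]
    have h5 := Real.sqrt_le_sqrt h4
    rw [Real.sqrt_sq_eq_abs, Real.sqrt_sq hs0] at h5
    have h6 := le_abs_self (2 * lam - (1 - L))
    linarith
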